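/- Let X ⊂ ℝ^n be nonempty convex compact, Q symmetric positive definite, q > 0, c ∈ ℝ^n, and let C ∈ ℝ^{n×n} be symmetric negative definite with −qQ ⪯ C (i.e. qQ + C positive semidefinite). Let x⋆(z) := argmin_{x∈X} [ q xᵀQx + 2(Cz + c)ᵀx ]. Then x⋆ is firmly nonexpansive in the (−C)-norm: for all v, w ∈ ℝ^n, ‖x⋆(v) − x⋆(w)‖²_{−C} ≤ (v − w)ᵀ(−C)(x⋆(v) − x⋆(w)). (Lemma 6, statement 3.) -/

import Mathlib

open Matrix Filter Topology Finset
open scoped Kronecker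

noncomputable section

/-- Euclidean norm of a finitely-indexed real vector. -/
def eunorm {ι : Type*} [Fintype ι] (x : ι → ℝ) : ℝ := Real.sqrt (x ⬝ᵥ x)

/-- `S`-weighted norm `‖x‖_S = √(xᵀ S x)`. -/
def wnorm {ι : Type*} [Fintype ι] (S : Matrix ι ι ℝ) (x : ι → ℝ) : ℝ :=
  Real.sqrt (x ⬝ᵥ S.mulVec x)

/-- Quadratic cost `J(x,z) = q·xᵀQx + 2(Cz+c)ᵀx`. -/
def cost {n : ℕ} (Q C : Matrix (Fin n) (Fin n) ℝ) (qi : ℝ) (ci : Fin n → ℝ)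
    (x z : Fin n → ℝ) : ℝ :=
  qi * (x ⬝ᵥ Q.mulVec x) + 2 * ((C.mulVec z + ci) ⬝ᵥ x)

/-- `xst` is the optimal-response map: for every `z`, `xst z` minimizes the cost over `X`. -/
def IsOptResp {n : ℕ} (X : Set (Fin n → ℝ)) (Q C : Matrix (Fin n) (Fin n) ℝ)
    (qi : ℝ) (ci : Fin n → ℝ) (xst : (Fin n → ℝ) → (Fin n → ℝ)) : Prop :=
  ∀ z, xst z ∈ X ∧ ∀ y ∈ X, cost Q C qi ci (xst z) z ≤ cost Q C qi ci y z

/-- Stacked optimal responses `x⋆(z) = (x^{1⋆}(z^1);…;x^{N⋆}(z^N))`. -/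
def extMap {n N : ℕ} (xstar : Fin N → (Fin n → ℝ) → (Fin n → ℝ))
    (z : Fin N × Fin n → ℝ) : Fin N × Fin n → ℝ :=
  fun p => xstar p.1 (fun j => z (p.1, j)) p.2

/-- Extended aggregation map `A_ν(z) = (P^ν ⊗ I_n) x⋆(z)`. -/
def aggMap {n N : ℕ} (P : Matrix (Fin N) (Fin N) ℝ) (ν : ℕ)
    (xstar : Fin N → (Fin n → ℝ) → (Fin n → ℝ)) (z : Fin N × Fin n → ℝ) :
    Fin N × Fin n → ℝ :=
  ((P ^ ν) ⊗ₖ (1 : Matrix (Fin n) (Fin n) ℝ)).mulVec (extMap xstar z)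

/-- The matrix `(1/N)·1_N 1_Nᵀ` with all entries `1/N`. -/
def avgMat (N : ℕ) : Matrix (Fin N) (Fin N) ℝ := Matrix.of fun _ _ => (N : ℝ)⁻¹

/-- Mean-field aggregation map `A(z) = ((1/N)·1 1ᵀ ⊗ I_n) x⋆(z)`. -/
def meanAgg {n N : ℕ} (xstar : Fin N → (Fin n → ℝ) → (Fin n → ℝ))
    (z : Fin N × Fin n → ℝ) : Fin N × Fin n → ℝ :=
  ((avgMat N) ⊗ₖ (1 : Matrix (Fin n) (Fin n) ℝ)).mulVec (extMap xstar z)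

/-- Maximum-row-sum matrix norm `‖A‖_∞`. -/
def rowSumNorm {N : ℕ} (A : Matrix (Fin N) (Fin N) ℝ) : ℝ := ⨆ i, ∑ j, |A i j|

/-- Spectral norm (ℓ²-operator norm) of a real matrix. -/
def specNorm {ι : Type*} [Fintype ι] [DecidableEq ι] (P : Matrix ι ι ℝ) : ℝ :=
  ‖LinearMap.toContinuousLinearMap (Matrix.toEuclideanLin P)‖

/-- Map `A_{m,m}(z) = (P^m ⊗ I_n) x⋆((P^m ⊗ I_n) z)`. -/
def halfAgg {n N : ℕ} (P : Matrix (Fin N) (Fin N) ℝ) (m : ℕ)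
    (xstar : Fin N → (Fin n → ℝ) → (Fin n → ℝ)) (z : Fin N × Fin n → ℝ) :
    Fin N × Fin n → ℝ :=
  ((P ^ m) ⊗ₖ (1 : Matrix (Fin n) (Fin n) ℝ)).mulVec
    (extMap xstar (((P ^ m) ⊗ₖ (1 : Matrix (Fin n) (Fin n) ℝ)).mulVec z))

lemma dot_symm {n : ℕ} {Q : Matrix (Fin n) (Fin n) ℝ} (hQsymm : Qᵀ = Q)
    (d x : Fin n → ℝ) : d ⬝ᵥ Q.mulVec x = x ⬝ᵥ Q.mulVec d := by
  rw [Matrix.dotProduct_mulVec, ← Matrix.mulVec_transpose, hQsymm, dotProduct_comm]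

lemma cost_expand {n : ℕ} (Q C : Matrix (Fin n) (Fin n) ℝ) (hQsymm : Qᵀ = Q)
    (qi : ℝ) (ci : Fin n → ℝ) (x d z : Fin n → ℝ) (t : ℝ) :
    cost Q C qi ci (x + t • d) z
      = cost Q C qi ci x z
        + t * (2 * qi * (x ⬝ᵥ Q.mulVec d) + 2 * ((C.mulVec z + ci) ⬝ᵥ d))
        + t ^ 2 * (qi * (d ⬝ᵥ Q.mulVec d)) := by
  unfold cost
  have hsym : d ⬝ᵥ Q.mulVec x = x ⬝ᵥ Q.mulVec d := dot_symm hQsymm d x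
  simp only [Matrix.mulVec_add, Matrix.mulVec_smul, dotProduct_add, add_dotProduct,
    smul_dotProduct, dotProduct_smul, smul_eq_mul, hsym]
  ring

/-- Variational inequality for the optimal response. -/
lemma optResp_vi {n : ℕ} {X : Set (Fin n → ℝ)} (hconv : Convex ℝ X)
    {Q C : Matrix (Fin n) (Fin n) ℝ} (hQsymm : Qᵀ = Q)
    {q : ℝ} {c : Fin n → ℝ}
    {xstar : (Fin n → ℝ) → (Fin n → ℝ)} (hxstar : IsOptResp X Q C q c xstar)
    (z y : Fin n → ℝ) (hy : y ∈ X) :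
    0 ≤ 2 * q * (xstar z ⬝ᵥ Q.mulVec (y - xstar z))
        + 2 * ((C.mulVec z + c) ⬝ᵥ (y - xstar z)) := by
  obtain ⟨hxX, hmin⟩ := hxstar z
  set x := xstar z
  set d := y - x with hd
  set g := 2 * q * (x ⬝ᵥ Q.mulVec d) + 2 * ((C.mulVec z + c) ⬝ᵥ d) with hg
  set M := q * (d ⬝ᵥ Q.mulVec d) with hM
  have key : ∀ t : ℝ, 0 < t → t ≤ 1 → 0 ≤ g + t * M := by
    intro t ht0 ht1
    have hmem : x + t • d ∈ X := by
      have : x + t • d = (1 - t) • x + t • y := by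
        simp [hd, smul_sub]; module
      rw [this]
      exact hconv hxX hy (by linarith) (le_of_lt ht0) (by ring)
    have := hmin _ hmem
    rw [cost_expand Q C hQsymm q c x d z t] at this
    nlinarith [this, sq_nonneg t]
  have hseq : ∀ k : ℕ, 0 ≤ g + (1 / (k + 1 : ℝ)) * M := by
    intro k
    refine key _ (by positivity) ?_
    rw [div_le_one (by positivity)]
    linarith [Nat.cast_nonneg (α := ℝ) k]
  have htend : Tendsto (fun k : ℕ => g + (1 / (k + 1 : ℝ)) * M) atTop (𝓝 g) := by
    have := tendsto_one_div_add_atTop_nhds_zero_nat.mul_const M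
    simpa using tendsto_const_nhds.add this
  exact ge_of_tendsto' htend hseq


/-- Lemma 6, statement 3: if `C` is symmetric negative definite with
`−qQ ⪯ C`, then `x⋆` is firmly nonexpansive in the `(−C)`-norm. -/
theorem optResp_firmlyNonexpansive {n : ℕ} (hn : 0 < n)
    (X : Set (Fin n → ℝ)) (hne : X.Nonempty)
    (hconv : Convex ℝ X) (hcpt : IsCompact X)
    (Q : Matrix (Fin n) (Fin n) ℝ) (hQ : Q.PosDef) (q : ℝ) (hq : 0 < q)
    (C : Matrix (Fin n) (Fin n) ℝ) (c : Fin n → ℝ)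
    (hC : (-C).PosDef) (hqQC : (q • Q + C).PosSemidef)
    (xstar : (Fin n → ℝ) → (Fin n → ℝ))
    (hxstar : IsOptResp X Q C q c xstar) :
    ∀ v w : Fin n → ℝ,
      wnorm (-C) (xstar v - xstar w) ^ 2
        ≤ (v - w) ⬝ᵥ ((-C).mulVec (xstar v - xstar w)) := by
  intro v w
  have hQsymm : Qᵀ = Q := hQ.isHermitian.eq
  have hCsymm : Cᵀ = C := by
    have := hC.isHermitian.eq
    simpa [Matrix.transpose_neg, neg_inj] using this
  set x1 := xstar v
  set x2 := xstar w
  set d := x1 - x2 with hd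
  have h1 := optResp_vi hconv hQsymm hxstar v x2 (hxstar w).1
  have h2 := optResp_vi hconv hQsymm hxstar w x1 (hxstar v).1
  -- rewrite x2 - x1 = -d, x1 - x2 = d
  have hneg : x2 - x1 = -d := by simp [hd]
  rw [hneg] at h1
  -- sum inequality
  have hsym12 : x2 ⬝ᵥ Q.mulVec d = d ⬝ᵥ Q.mulVec x2 := dot_symm hQsymm x2 d ▸ rfl
  have hCd : (v - w) ⬝ᵥ C.mulVec d = (C.mulVec v + c) ⬝ᵥ d - (C.mulVec w + c) ⬝ᵥ d := by
    rw [dot_symm hCsymm (v - w) d, Matrix.mulVec_sub, dotProduct_sub,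
      add_dotProduct, add_dotProduct, dotProduct_comm (C.mulVec v) d,
      dotProduct_comm (C.mulVec w) d]
    ring
  -- key: q * dᵀQd ≤ (v-w)ᵀ(-C)d
  have hx1d : x1 ⬝ᵥ Q.mulVec (-d) = -(x1 ⬝ᵥ Q.mulVec d) := by
    simp [Matrix.mulVec_neg]
  have hx2Qd : x2 ⬝ᵥ Q.mulVec d = x1 ⬝ᵥ Q.mulVec d - d ⬝ᵥ Q.mulVec d := by
    have : x2 = x1 - d := by simp [hd]
    rw [this]; simp [sub_dotProduct]
  have hkey : q * (d ⬝ᵥ Q.mulVec d) ≤ (v - w) ⬝ᵥ ((-C).mulVec d) := by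
    have hrw : (v - w) ⬝ᵥ ((-C).mulVec d) = -((v - w) ⬝ᵥ C.mulVec d) := by
      simp [Matrix.neg_mulVec]
    rw [hrw, hCd]
    have e1 : (C.mulVec v + c) ⬝ᵥ (-d) = -((C.mulVec v + c) ⬝ᵥ d) := by simp
    rw [hx1d, e1] at h1
    rw [hx2Qd] at h2
    linarith
  -- (-C) ⪯ qQ
  have hle : d ⬝ᵥ ((-C).mulVec d) ≤ q * (d ⬝ᵥ Q.mulVec d) := by
    have := hqQC.dotProduct_mulVec_nonneg d
    simp only [star_trivial] at this
    have hexp : d ⬝ᵥ ((q • Q + C).mulVec d)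
        = q * (d ⬝ᵥ Q.mulVec d) + d ⬝ᵥ C.mulVec d := by
      simp [Matrix.add_mulVec, Matrix.smul_mulVec, dotProduct_add, dotProduct_smul]
    rw [hexp] at this
    have : -(d ⬝ᵥ C.mulVec d) ≤ q * (d ⬝ᵥ Q.mulVec d) := by linarith
    simpa [Matrix.neg_mulVec] using this
  have hnn : 0 ≤ d ⬝ᵥ ((-C).mulVec d) := by
    have := hC.posSemidef.dotProduct_mulVec_nonneg d
    simpa using this
  have hwn : wnorm (-C) d ^ 2 = d ⬝ᵥ ((-C).mulVec d) := Real.sq_sqrt hnn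
  rw [hwn]
  exact hle.trans (hkey)
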